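/- Let 0 < ξ₀ < ξ₁ < ξ₂ < 1 and θ > 0, and set cₙ = sin(nπξ₀) − θ sin(nπξ₁) + sin(nπξ₂) for n ≥ 1. Then there exists T* > 0 such that for all s ∈ (0, T*): Σₙ₌₁^∞ n e^{−n²π²s} cₙ > 0 and Σₙ₌₁^∞ (−1)ⁿ n e^{−n²π²s} cₙ < 0. -/

import Mathlib

open Real Set

lemma oddKernel_est {a X : ℝ} (ha : 0 < a) (ha' : a < 1/2) (hX : 1 ≤ X) :
    |HurwitzZeta.oddKernel a X - a * Real.exp (-π * a^2 * X)| ≤ 12 * Real.exp (-π * X / 4) := by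
  have hX0 : (0:ℝ) < X := lt_of_lt_of_le one_pos hX
  set f : ℤ → ℝ := fun n ↦ ((n : ℝ) + a) * Real.exp (-π * ((n:ℝ) + a)^2 * X) with hf
  have h : HasSum f (HurwitzZeta.oddKernel a X) := HurwitzZeta.hasSum_int_oddKernel a hX0
  have h0 : f 0 = a * Real.exp (-π * a^2 * X) := by simp [hf]
  have h1 : HasSum (fun n : ℕ ↦ f n + f (-n)) (HurwitzZeta.oddKernel a X + f 0) := h.nat_add_neg
  have h2 : HasSum (fun n : ℕ ↦ f (n+1) + f (-(n+1)))
      (HurwitzZeta.oddKernel a X - f 0) := by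
    have h2' := (hasSum_nat_add_iff' (f := fun n : ℕ ↦ f n + f (-n)) 1).mpr h1
    simp only [Finset.range_one, Finset.sum_singleton, Nat.cast_zero, neg_zero] at h2'
    have : HurwitzZeta.oddKernel a X + f 0 - (f 0 + f 0) = HurwitzZeta.oddKernel a X - f 0 := by
      ring
    rw [this] at h2'
    refine h2'.congr_fun fun n ↦ ?_
    push_cast
    ring_nf
  -- bound function
  have hgeo : HasSum (fun n : ℕ ↦ ((n:ℝ)+2) * (1/2)^n) 6 := by
    have g1 : HasSum (fun n : ℕ ↦ (n:ℝ) * (1/2)^n) ((1/2) / (1 - 1/2)^2) :=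
      hasSum_coe_mul_geometric_of_norm_lt_one (by rw [norm_eq_abs, abs_lt]; constructor <;> norm_num)
    have g2 : HasSum (fun n : ℕ ↦ ((1:ℝ)/2)^n) (1 - 1/2)⁻¹ :=
      hasSum_geometric_of_lt_one (by norm_num) (by norm_num)
    have := g1.add (g2.mul_left 2)
    norm_num at this
    refine this.congr_fun fun n ↦ by ring
  have hB : HasSum (fun n : ℕ ↦ (2 * Real.exp (-π * X / 4)) * (((n:ℝ)+2) * (1/2)^n))
      (12 * Real.exp (-π * X / 4)) := by
    have := hgeo.mul_left (2 * Real.exp (-π * X / 4))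
    convert this using 1
    all_goals first | rfl | ring
  have hbound : ∀ n : ℕ, ‖f (n+1) + f (-(n+1))‖ ≤
      (2 * Real.exp (-π * X / 4)) * (((n:ℝ)+2) * (1/2)^n) := by
    intro n
    set k : ℝ := (n : ℝ) + 1 with hk
    have hk1 : 1 ≤ k := by simp [hk]
    have hexp : Real.exp (-π * X * (2*k-1) / 4) ≤ Real.exp (-π * X / 4) * (1/2)^n := by
      have hhalf : ((1:ℝ)/2)^n = Real.exp (-(Real.log 2) * n) := by
        rw [mul_comm, Real.exp_nat_mul, Real.exp_neg, Real.exp_log two_pos]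
        norm_num
      rw [hhalf, ← Real.exp_add, Real.exp_le_exp]
      have hlog : Real.log 2 ≤ 1 := by
        nlinarith [Real.log_two_lt_d9]
      have hπ : (1:ℝ) ≤ π * X / 2 := by nlinarith [Real.pi_gt_three]
      have : k = (n:ℝ) + 1 := hk
      nlinarith [mul_le_mul_of_nonneg_left hlog (by positivity : (0:ℝ) ≤ (n:ℝ)),
        mul_le_mul_of_nonneg_left hπ (by positivity : (0:ℝ) ≤ (n:ℝ))]
    have e1 : |f (n+1)| ≤ (k+1) * Real.exp (-π * X * (2*k-1) / 4) := by
      have hcast : f (n+1) = (k + a) * Real.exp (-π * (k+a)^2 * X) := by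
        simp only [hf, hk]; push_cast; ring_nf
      rw [hcast, abs_mul, abs_of_pos (by positivity : (0:ℝ) < k + a),
        abs_of_pos (Real.exp_pos _)]
      have h1' : k + a ≤ k + 1 := by linarith
      have h2' : Real.exp (-π * (k+a)^2 * X) ≤ Real.exp (-π * X * (2*k-1) / 4) := by
        rw [Real.exp_le_exp]
        have hq : (2*k-1)/4 ≤ (k+a)^2 := by
          nlinarith [sq_nonneg (2*k - 1/2), sq_nonneg a, mul_pos (lt_of_lt_of_le one_pos hk1) ha]
        nlinarith [mul_le_mul_of_nonneg_left hq (le_of_lt (mul_pos Real.pi_pos hX0))]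
      calc (k + a) * Real.exp (-π * (k+a)^2 * X)
          ≤ (k + 1) * Real.exp (-π * (k+a)^2 * X) := by
            apply mul_le_mul_of_nonneg_right h1' (Real.exp_pos _).le
        _ ≤ (k + 1) * Real.exp (-π * X * (2*k-1) / 4) := by
            apply mul_le_mul_of_nonneg_left h2' (by linarith)
    have e2 : |f (-(n+1))| ≤ (k+1) * Real.exp (-π * X * (2*k-1) / 4) := by
      have hcast : f (-(n+1)) = (-k + a) * Real.exp (-π * (-k+a)^2 * X) := by
        simp only [hf, hk]; push_cast; ring_nf
      rw [hcast, abs_mul, abs_of_pos (Real.exp_pos _)]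
      have habs : |(-k + a)| = k - a := by
        rw [abs_of_neg (by linarith)]; ring
      rw [habs]
      have h1' : k - a ≤ k + 1 := by linarith
      have h2' : Real.exp (-π * (-k+a)^2 * X) ≤ Real.exp (-π * X * (2*k-1) / 4) := by
        rw [Real.exp_le_exp]
        have hq : (2*k-1)/4 ≤ (-k+a)^2 := by nlinarith [sq_nonneg (k - a - 1/2)]
        nlinarith [mul_le_mul_of_nonneg_left hq (le_of_lt (mul_pos Real.pi_pos hX0))]
      calc (k - a) * Real.exp (-π * (-k+a)^2 * X)
          ≤ (k + 1) * Real.exp (-π * (-k+a)^2 * X) := by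
            apply mul_le_mul_of_nonneg_right h1' (Real.exp_pos _).le
        _ ≤ (k + 1) * Real.exp (-π * X * (2*k-1) / 4) := by
            apply mul_le_mul_of_nonneg_left h2' (by linarith)
    calc ‖f (n+1) + f (-(n+1))‖ ≤ |f (n+1)| + |f (-(n+1))| := abs_add_le _ _
      _ ≤ 2 * ((k+1) * Real.exp (-π * X * (2*k-1) / 4)) := by linarith
      _ ≤ (2 * Real.exp (-π * X / 4)) * (((n:ℝ)+2) * (1/2)^n) := by
          have : k + 1 = (n:ℝ) + 2 := by rw [hk]; ring
          rw [this]
          have := mul_le_mul_of_nonneg_left hexp (by positivity : (0:ℝ) ≤ (n:ℝ)+2)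
          nlinarith [Real.exp_pos (-π * X * (2*k-1)/4)]
  calc |HurwitzZeta.oddKernel a X - a * Real.exp (-π * a^2 * X)|
      = ‖∑' n : ℕ, (f (n+1) + f (-(n+1)))‖ := by
        rw [h2.tsum_eq, h0, Real.norm_eq_abs]
    _ ≤ 12 * Real.exp (-π * X / 4) := tsum_of_norm_bounded hB hbound

lemma hasSum_pnat_sin (ξ : ℝ) {s : ℝ} (hs : 0 < s) :
    HasSum (fun n : ℕ+ ↦ (n : ℝ) * Real.exp (-(n : ℝ) ^ 2 * π ^ 2 * s) * Real.sin (n * π * ξ))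
      ((1/2) * HurwitzZeta.sinKernel ((ξ/2 : ℝ) : UnitAddCircle) (π * s)) := by
  have h := (HurwitzZeta.hasSum_nat_sinKernel (ξ/2 : ℝ) (mul_pos Real.pi_pos hs)).mul_left (1/2)
  set g : ℕ → ℝ := fun n ↦ (1:ℝ)/2 *
    (2 * n * Real.sin (2 * π * (ξ/2) * n) * Real.exp (-π * n ^ 2 * (π * s))) with hg
  have h' : HasSum (fun n : ℕ+ ↦ g n) ((1/2) * HurwitzZeta.sinKernel ((ξ/2 : ℝ) : UnitAddCircle) (π * s)) := by
    refine (Function.Injective.hasSum_iff (f := g) PNat.coe_injective ?_).mpr h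
    intro m hm
    have : m = 0 := by
      by_contra hm0
      exact hm ⟨⟨m, Nat.pos_of_ne_zero hm0⟩, rfl⟩
    simp [this, hg]
  refine h'.congr_fun fun n ↦ ?_
  simp only [hg]
  push_cast
  ring_nf

set_option maxHeartbeats 2000000 in
lemma core_pos {x y z θ : ℝ} (hx : 0 < x) (hxy : x < y) (hy : y < 1)
    (hz0 : 0 < z) (hz1 : z < 1) (hθ : 0 < θ) :
    ∃ T : ℝ, 0 < T ∧ ∀ s ∈ Ioo (0:ℝ) T,
      0 < HurwitzZeta.sinKernel ((x/2 : ℝ) : UnitAddCircle) (π*s)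
          - θ * HurwitzZeta.sinKernel ((y/2 : ℝ) : UnitAddCircle) (π*s)
          + HurwitzZeta.sinKernel ((z/2 : ℝ) : UnitAddCircle) (π*s) := by
  have hM0 : (0:ℝ) < 24 + 13*θ := by positivity
  have hMx : 1 < 2*(24 + 13*θ)/x := by
    rw [lt_div_iff₀ hx]; nlinarith
  have hL0 : 0 < Real.log (2*(24 + 13*θ)/x) := Real.log_pos hMx
  set L : ℝ := Real.log (2*(24 + 13*θ)/x) with hL
  have hδ : 0 < y^2 - x^2 := by nlinarith
  refine ⟨min (1/π) ((y^2 - x^2)/(4*L)), lt_min (by positivity) (div_pos hδ (by linarith)), fun s hs ↦ ?_⟩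
  obtain ⟨hs0, hsT⟩ := hs
  have hsπ : s < 1/π := lt_of_lt_of_le hsT (min_le_left _ _)
  have hsL : s < (y^2 - x^2)/(4*L) := lt_of_lt_of_le hsT (min_le_right _ _)
  have hπs : 0 < π * s := mul_pos Real.pi_pos hs0
  have hsne : s ≠ 0 := ne_of_gt hs0
  have hπne : π ≠ 0 := ne_of_gt Real.pi_pos
  have hX1 : 1 ≤ 1/(π*s) := by
    rw [le_div_iff₀ hπs, one_mul]
    have := (lt_div_iff₀ Real.pi_pos).mp hsπ
    linarith
  have hX0 : 0 < 1/(π*s) := lt_of_lt_of_le one_pos hX1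
  have hexpeq : ∀ w : ℝ, -π * (w/2)^2 * (1/(π*s)) = -(w^2/(4*s)) := by
    intro w; field_simp; ring
  have hexpeq4 : -π * (1/(π*s)) / 4 = -(1/(4*s)) := by
    field_simp
  have est : ∀ w : ℝ, 0 < w → w < 1 →
      |HurwitzZeta.oddKernel ((w/2 : ℝ) : UnitAddCircle) (1/(π*s))
          - (w/2) * Real.exp (-(w^2/(4*s)))| ≤ 12 * Real.exp (-(1/(4*s))) := by
    intro w hw0 hw1
    have := oddKernel_est (a := w/2) (X := 1/(π*s)) (by linarith) (by linarith) hX1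
    rwa [hexpeq w, hexpeq4] at this
  have e0 := abs_le.mp (est x hx (by linarith))
  have e1 := abs_le.mp (est y (by linarith) hy)
  have e2 := abs_le.mp (est z hz0 hz1)
  have hFE1 : Real.exp (-(1/(4*s))) ≤ Real.exp (-(y^2/(4*s))) := by
    apply Real.exp_le_exp.mpr
    have hy2 : y^2 ≤ 1 := by nlinarith
    have h4s : (0:ℝ) < 4*s := by linarith
    rw [neg_le_neg_iff, div_le_div_iff₀ h4s h4s]
    nlinarith
  have hkey : (24 + 13*θ) * Real.exp (-(y^2/(4*s))) < (x/2) * Real.exp (-(x^2/(4*s))) := by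
    have hsplit : Real.exp (-(y^2/(4*s)))
        = Real.exp (-(x^2/(4*s))) * Real.exp (-((y^2-x^2)/(4*s))) := by
      rw [← Real.exp_add]; congr 1; ring
    have hlt : Real.exp (-((y^2-x^2)/(4*s))) < x/(2*(24 + 13*θ)) := by
      have h1 : L < (y^2-x^2)/(4*s) := by
        rw [lt_div_iff₀ (by linarith : (0:ℝ) < 4*s)]
        have h2 := (lt_div_iff₀ (by linarith : (0:ℝ) < 4*L)).mp hsL
        nlinarith
      have h2 : Real.exp (-((y^2-x^2)/(4*s))) < Real.exp (-L) :=
        Real.exp_lt_exp.mpr (by linarith)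
      have h3 : Real.exp (-L) = x/(2*(24 + 13*θ)) := by
        rw [hL, Real.exp_neg, Real.exp_log (div_pos (by linarith) hx), inv_div]
      linarith
    calc (24 + 13*θ) * Real.exp (-(y^2/(4*s)))
        = (24 + 13*θ) * Real.exp (-(x^2/(4*s))) * Real.exp (-((y^2-x^2)/(4*s))) := by
          rw [hsplit]; ring
      _ < (24 + 13*θ) * Real.exp (-(x^2/(4*s))) * (x/(2*(24 + 13*θ))) :=
          mul_lt_mul_of_pos_left hlt (mul_pos hM0 (Real.exp_pos _))
      _ = (x/2) * Real.exp (-(x^2/(4*s))) := by field_simp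
  have t1 : θ * HurwitzZeta.oddKernel ((y/2 : ℝ) : UnitAddCircle) (1/(π*s))
      ≤ θ * ((y/2) * Real.exp (-(y^2/(4*s))) + 12 * Real.exp (-(1/(4*s)))) :=
    mul_le_mul_of_nonneg_left (by linarith [e1.2]) hθ.le
  have tyE : θ * ((y/2) * Real.exp (-(y^2/(4*s)))) ≤ θ * ((1/2) * Real.exp (-(y^2/(4*s)))) := by
    apply mul_le_mul_of_nonneg_left _ hθ.le
    apply mul_le_mul_of_nonneg_right (by linarith) (Real.exp_pos _).le
  have tF : θ * Real.exp (-(1/(4*s))) ≤ θ * Real.exp (-(y^2/(4*s))) :=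
    mul_le_mul_of_nonneg_left hFE1 hθ.le
  have hzE2 : 0 ≤ (z/2) * Real.exp (-(z^2/(4*s))) := mul_nonneg (by linarith) (Real.exp_pos _).le
  have hθE1 : 0 ≤ θ * Real.exp (-(y^2/(4*s))) := mul_nonneg hθ.le (Real.exp_pos _).le
  have hmain : 0 < HurwitzZeta.oddKernel ((x/2 : ℝ) : UnitAddCircle) (1/(π*s))
      - θ * HurwitzZeta.oddKernel ((y/2 : ℝ) : UnitAddCircle) (1/(π*s))
      + HurwitzZeta.oddKernel ((z/2 : ℝ) : UnitAddCircle) (1/(π*s)) := by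
    nlinarith [e0.1, e2.1, hkey, hFE1, t1, tyE, tF, hzE2, hθE1]
  have fe : ∀ w : ℝ, HurwitzZeta.sinKernel ((w/2 : ℝ) : UnitAddCircle) (π*s)
      = (1/(π*s)) ^ (3/2 : ℝ) * HurwitzZeta.oddKernel ((w/2 : ℝ) : UnitAddCircle) (1/(π*s)) := by
    intro w
    have h := HurwitzZeta.oddKernel_functional_equation ((w/2 : ℝ) : UnitAddCircle) (1/(π*s))
    rw [one_div_one_div] at h
    have hXne : (0:ℝ) < (1/(π*s)) ^ (3/2 : ℝ) := Real.rpow_pos_of_pos hX0 _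
    rw [h]
    field_simp
  rw [fe x, fe y, fe z]
  have hX32 : (0:ℝ) < (1/(π*s)) ^ (3/2 : ℝ) := Real.rpow_pos_of_pos hX0 _
  nlinarith [mul_pos hX32 hmain]

lemma sin_shift (n : ℕ+) (ξ : ℝ) :
    Real.sin ((n:ℝ) * π * (ξ - 1)) = (-1)^(n:ℕ) * Real.sin ((n:ℝ) * π * ξ) := by
  have h1 : (n:ℝ) * π * ξ = ((n:ℝ) * π * (ξ - 1)) + (n:ℕ) * π := by push_cast; ring
  have h2 := Real.sin_add_nat_mul_pi ((n:ℝ) * π * (ξ - 1)) (n:ℕ)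
  rw [← h1] at h2
  rw [h2, ← mul_assoc, ← pow_add, Even.neg_one_pow ⟨(n:ℕ), by ring⟩, one_mul]

theorem dual_boundary_flux_signs_smallTime
    (ξ₀ ξ₁ ξ₂ : ℝ) (h0 : 0 < ξ₀) (h01 : ξ₀ < ξ₁) (h12 : ξ₁ < ξ₂) (h2 : ξ₂ < 1)
    (θ : ℝ) (hθ : 0 < θ)
    (c : ℕ+ → ℝ)
    (hc : ∀ n : ℕ+, c n = Real.sin (n * π * ξ₀) - θ * Real.sin (n * π * ξ₁)
        + Real.sin (n * π * ξ₂)) :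
    ∃ Tstar : ℝ, 0 < Tstar ∧ ∀ s ∈ Ioo (0:ℝ) Tstar,
      (0 < ∑' n : ℕ+, (n : ℝ) * Real.exp (-(n : ℝ) ^ 2 * π ^ 2 * s) * c n) ∧
      (∑' n : ℕ+, (-1 : ℝ) ^ (n : ℕ) * (n : ℝ) * Real.exp (-(n : ℝ) ^ 2 * π ^ 2 * s) * c n < 0) := by
  obtain ⟨T₁, hT₁, H₁⟩ := core_pos h0 h01 (h12.trans h2) (h0.trans (h01.trans h12)) h2 hθ
  obtain ⟨T₂, hT₂, H₂⟩ := core_pos (x := 1-ξ₂) (y := 1-ξ₁) (z := 1-ξ₀) (θ := θ)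
    (by linarith) (by linarith) (by linarith) (by linarith) (by linarith) hθ
  refine ⟨min T₁ T₂, lt_min hT₁ hT₂, fun s hs ↦ ?_⟩
  obtain ⟨hs0, hsT⟩ := hs
  constructor
  · have h₀ := hasSum_pnat_sin ξ₀ hs0
    have h₁ := (hasSum_pnat_sin ξ₁ hs0).mul_left θ
    have h₂ := hasSum_pnat_sin ξ₂ hs0
    have H := (h₀.sub h₁).add h₂
    have Heq : HasSum (fun n : ℕ+ ↦ (n : ℝ) * Real.exp (-(n : ℝ) ^ 2 * π ^ 2 * s) * c n)
        ((1/2) * HurwitzZeta.sinKernel ((ξ₀/2 : ℝ) : UnitAddCircle) (π * s)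
          - θ * ((1/2) * HurwitzZeta.sinKernel ((ξ₁/2 : ℝ) : UnitAddCircle) (π * s))
          + (1/2) * HurwitzZeta.sinKernel ((ξ₂/2 : ℝ) : UnitAddCircle) (π * s)) :=
      H.congr_fun fun n ↦ by rw [hc n]; ring
    rw [Heq.tsum_eq]
    have hpos := H₁ s ⟨hs0, lt_of_lt_of_le hsT (min_le_left _ _)⟩
    linarith
  · have hK : ∀ ξ : ℝ, HurwitzZeta.sinKernel (((ξ-1)/2 : ℝ) : UnitAddCircle) (π*s)
        = - HurwitzZeta.sinKernel (((1-ξ)/2 : ℝ) : UnitAddCircle) (π*s) := by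
      intro ξ
      have h : ((ξ-1)/2 : ℝ) = -((1-ξ)/2) := by ring
      have hcoe : (((-((1-ξ)/2)) : ℝ) : UnitAddCircle) = -((((1-ξ)/2) : ℝ) : UnitAddCircle) := by
        push_cast
        rfl
      rw [h, hcoe, HurwitzZeta.sinKernel_neg]
    have h₀ := hasSum_pnat_sin (ξ₀ - 1) hs0
    have h₁ := (hasSum_pnat_sin (ξ₁ - 1) hs0).mul_left θ
    have h₂ := hasSum_pnat_sin (ξ₂ - 1) hs0
    have H := (h₀.sub h₁).add h₂
    have Heq : HasSum (fun n : ℕ+ ↦ (-1:ℝ)^(n:ℕ) * (n : ℝ) * Real.exp (-(n : ℝ) ^ 2 * π ^ 2 * s) * c n)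
        ((1/2) * HurwitzZeta.sinKernel (((ξ₀-1)/2 : ℝ) : UnitAddCircle) (π * s)
          - θ * ((1/2) * HurwitzZeta.sinKernel (((ξ₁-1)/2 : ℝ) : UnitAddCircle) (π * s))
          + (1/2) * HurwitzZeta.sinKernel (((ξ₂-1)/2 : ℝ) : UnitAddCircle) (π * s)) := by
      refine H.congr_fun fun n ↦ ?_
      rw [hc n, sin_shift n ξ₀, sin_shift n ξ₁, sin_shift n ξ₂]
      ring
    rw [Heq.tsum_eq, hK ξ₀, hK ξ₁, hK ξ₂]
    have hpos := H₂ s ⟨hs0, lt_of_lt_of_le hsT (min_le_right _ _)⟩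
    linarith
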